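/- If in an associative algebra over a field a polynomial identity of degree n holds, then a multilinear admissible identity of degree at most n holds, i.e., an identity of the form x_1 x_2 ⋯ x_m = Σ_{σ ∈ S_m, σ ≠ id} β_σ x_{σ(1)} ⋯ x_{σ(m)} with m ≤ n. -/

import Mathlib

namespace Stmt15

variable {F A : Type*} [Field F] [Ring A] [Algebra F A]

def muf (i j : ℕ) : ℕ → ℕ := fun k => if k = j then i else k
def nuf (i j : ℕ) : ℕ → ℕ := fun k => if k = i then j else k
def mu (i j : ℕ) (v : List ℕ) : List ℕ := v.map (muf i j)
def nu (i j : ℕ) (w : List ℕ) : List ℕ := w.map (nuf i j)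

def reps (i j : ℕ) : List ℕ → List (List ℕ)
  | [] => [[]]
  | k :: w =>
    if k = i then (reps i j w).map (i :: ·) ++ (reps i j w).map (j :: ·)
    else (reps i j w).map (k :: ·)

lemma mem_reps {i j : ℕ} (hij : i ≠ j) {w : List ℕ} (hjw : j ∉ w) {v : List ℕ} :
    v ∈ reps i j w ↔ mu i j v = w := by
  induction w generalizing v with
  | nil => cases v <;> simp [reps, mu]
  | cons k w ih =>
    have hjw' : j ∉ w := fun h => hjw (List.mem_cons_of_mem _ h)
    have hkj : k ≠ j := fun h => hjw (h ▸ List.mem_cons_self)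
    have ihh := fun v => ih (v := v) hjw'
    cases v with
    | nil =>
      by_cases hk : k = i <;> simp [reps, hk, mu]
    | cons a v =>
      by_cases hk : k = i
      · subst hk
        simp only [reps, if_pos rfl, List.mem_append, List.mem_map, mu, List.map_cons,
          List.cons.injEq, ihh]
        by_cases haj : a = j <;> by_cases hai : a = k <;>
          simp_all [muf] <;> tauto
      · simp only [reps, if_neg hk, List.mem_map, mu, List.map_cons, List.cons.injEq, ihh]
        by_cases haj : a = j <;> by_cases hak : a = k <;>
          simp_all [muf] <;> tauto

lemma reps_nodup {i j : ℕ} (hij : i ≠ j) (w : List ℕ) : (reps i j w).Nodup := by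
  induction w with
  | nil => simp [reps]
  | cons k w ih =>
    by_cases hk : k = i
    · subst hk
      simp only [reps, if_pos rfl]
      refine List.Nodup.append (ih.map ?_) (ih.map ?_) ?_
      · exact fun a b h => by simpa using h
      · exact fun a b h => by simpa using h
      · intro v hv hv'
        simp only [List.mem_map] at hv hv'
        obtain ⟨v1, -, rfl⟩ := hv
        obtain ⟨v2, -, h⟩ := hv'
        simp only [List.cons.injEq] at h
        exact hij h.1.symm
    · simpa [reps, if_neg hk] using ih.map fun a b h => by simpa using h



-- pointwise facts
lemma not_mem_nu {i j : ℕ} (hij : i ≠ j) (w : List ℕ) : i ∉ nu i j w := by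
  intro h
  obtain ⟨k, -, hnk⟩ := List.mem_map.1 h
  by_cases hk : k = i
  · rw [hk] at hnk; simp only [nuf, if_pos rfl] at hnk; exact hij hnk.symm
  · simp only [nuf, if_neg hk] at hnk; exact hk hnk

lemma not_mem_mu {i j : ℕ} (hij : i ≠ j) (v : List ℕ) : j ∉ mu i j v := by
  intro h
  obtain ⟨k, -, hnk⟩ := List.mem_map.1 h
  by_cases hk : k = j
  · rw [hk] at hnk; simp only [muf, if_pos rfl] at hnk; exact hij hnk
  · simp only [muf, if_neg hk] at hnk; exact hk hnk

lemma mem_mu_of_mem_j {i j : ℕ} {v : List ℕ} (h : j ∈ v) : i ∈ mu i j v := by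
  simp only [mu, List.mem_map]
  exact ⟨j, h, by simp [muf]⟩

lemma mu_eq_self {i j : ℕ} {v : List ℕ} (h : j ∉ v) : mu i j v = v := by
  apply List.map_congr_left ?_ |>.trans (List.map_id v)
  intro k hk
  have : k ≠ j := fun e => h (e ▸ hk)
  simp [muf, this]

lemma mu_nu {i j : ℕ} {w : List ℕ} (hjw : j ∉ w) : mu i j (nu i j w) = w := by
  unfold mu nu
  rw [List.map_map]
  apply List.map_congr_left ?_ |>.trans (List.map_id w)
  intro k hk
  have hkj : k ≠ j := fun e => hjw (e ▸ hk)
  by_cases h : k = i <;> simp [muf, nuf, h, hkj]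

lemma nu_mu {i j : ℕ} (hij : i ≠ j) {v : List ℕ} (hiv : i ∉ v) : nu i j (mu i j v) = v := by
  unfold mu nu
  rw [List.map_map]
  apply List.map_congr_left ?_ |>.trans (List.map_id v)
  intro k hk
  have hki : k ≠ i := fun e => hiv (e ▸ hk)
  by_cases h : k = j <;> simp [muf, nuf, h, hki, hij]

lemma length_mu (i j : ℕ) (v : List ℕ) : (mu i j v).length = v.length := by simp [mu]

noncomputable def ev (x : ℕ → A) : (List ℕ →₀ F) →ₗ[F] A :=
  Finsupp.linearCombination F (fun w : List ℕ => (w.map x).prod)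

lemma ev_apply (x : ℕ → A) (c : List ℕ →₀ F) :
    ev x c = c.sum fun w a => a • (w.map x).prod :=
  Finsupp.linearCombination_apply _ _

lemma ev_single (x : ℕ → A) (w : List ℕ) (a : F) :
    ev x (Finsupp.single w a) = a • (w.map x).prod := by
  simp [ev, Finsupp.linearCombination_single]

noncomputable def Phi (i j : ℕ) (c : List ℕ →₀ F) : List ℕ →₀ F :=
  c.sum fun w a => ((reps i j w).map fun v => Finsupp.single v a).sum

noncomputable def Psi (i j : ℕ) (c : List ℕ →₀ F) : List ℕ →₀ F :=
  Finsupp.mapDomain (nu i j) c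

noncomputable def Del (i j : ℕ) (c : List ℕ →₀ F) : List ℕ →₀ F :=
  Phi i j c - c - Psi i j c

lemma sum_map_ite {α M : Type*} [DecidableEq α] [AddCommMonoid M]
    {l : List α} (hl : l.Nodup) (v : α) (a : M) :
    (l.map fun u => if u = v then a else 0).sum = if v ∈ l then a else 0 := by
  induction l with
  | nil => simp
  | cons u l ih =>
    rw [List.nodup_cons] at hl
    rw [List.map_cons, List.sum_cons, ih hl.2]
    by_cases h : u = v
    · subst h
      simp [hl.1]
    · simp [h, Ne.symm h]

lemma Phi_apply {i j : ℕ} (hij : i ≠ j) (c : List ℕ →₀ F)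
    (H1 : ∀ w ∈ c.support, j ∉ w) (v : List ℕ) :
    Phi i j c v = c (mu i j v) := by
  rw [Phi, Finsupp.sum_apply]
  have : (c.sum fun w a => (((reps i j w).map fun u => Finsupp.single u a).sum) v)
      = c.sum fun w a => if mu i j v = w then a else 0 := by
    apply Finsupp.sum_congr
    intro w hw
    refine ((map_list_sum (Finsupp.applyAddHom (M := F) v) _).trans ?_)
    simp only [List.map_map, Function.comp_def, Finsupp.applyAddHom_apply,
      Finsupp.single_apply]
    rw [sum_map_ite (reps_nodup hij w) v _]
    by_cases h : mu i j v = w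
    · rw [if_pos ((mem_reps hij (H1 w hw)).2 h), if_pos h]
    · rw [if_neg (fun hm => h ((mem_reps hij (H1 w hw)).1 hm)), if_neg h]
  rw [this, Finsupp.sum]
  rw [Finset.sum_ite_eq]
  by_cases h : mu i j v ∈ c.support
  · simp [h]
  · simp [h, Finsupp.notMem_support_iff.1 h]

lemma Psi_apply {i j : ℕ} (c : List ℕ →₀ F) (v : List ℕ) :
    Psi i j c v = c.sum fun w a => if nu i j w = v then a else 0 := by
  rw [Psi, Finsupp.mapDomain, Finsupp.sum_apply]
  apply Finsupp.sum_congr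
  intro w _
  rw [Finsupp.single_apply]

lemma Psi_apply_of_mem {i j : ℕ} (hij : i ≠ j) (c : List ℕ →₀ F) {v : List ℕ}
    (hiv : i ∈ v) : Psi i j c v = 0 := by
  rw [Psi_apply]
  rw [Finsupp.sum]
  apply Finset.sum_eq_zero
  intro w _
  have : nu i j w ≠ v := fun e => not_mem_nu hij w (e ▸ hiv)
  simp [this]

lemma Psi_apply_of_not_mem {i j : ℕ} (hij : i ≠ j) (c : List ℕ →₀ F)
    (H1 : ∀ w ∈ c.support, j ∉ w) {v : List ℕ} (hiv : i ∉ v) :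
    Psi i j c v = c (mu i j v) := by
  rw [Psi_apply]
  have : (c.sum fun w a => if nu i j w = v then a else 0)
      = c.sum fun w a => if mu i j v = w then a else 0 := by
    apply Finsupp.sum_congr
    intro w hw
    have : nu i j w = v ↔ mu i j v = w := by
      constructor
      · intro h; rw [← h, mu_nu (H1 w hw)]
      · intro h; rw [← h, nu_mu hij hiv]
    rw [if_congr this rfl rfl]
  rw [this, Finsupp.sum, Finset.sum_ite_eq]
  by_cases h : mu i j v ∈ c.support
  · simp [h]
  · simp [h, Finsupp.notMem_support_iff.1 h]

lemma Del_apply {i j : ℕ} (hij : i ≠ j) (c : List ℕ →₀ F)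
    (H1 : ∀ w ∈ c.support, j ∉ w) (H2 : ∀ w ∈ c.support, i ∈ w) (v : List ℕ) :
    Del i j c v = if i ∈ v ∧ j ∈ v then c (mu i j v) else 0 := by
  have hcv0 : i ∉ v → c v = 0 := fun h => by
    by_contra hc
    exact h (H2 v (Finsupp.mem_support_iff.2 hc))
  have hcvj : j ∈ v → c v = 0 := fun h => by
    by_contra hc
    exact H1 v (Finsupp.mem_support_iff.2 hc) h
  rw [Del, Finsupp.sub_apply, Finsupp.sub_apply, Phi_apply hij c H1]
  by_cases hi : i ∈ v <;> by_cases hj : j ∈ v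
  · rw [Psi_apply_of_mem hij c hi, hcvj hj]
    simp [hi, hj]
  · rw [Psi_apply_of_mem hij c hi, mu_eq_self hj]
    simp [hi, hj]
  · rw [Psi_apply_of_not_mem hij c H1 hi, hcv0 hi]
    simp [hi, hj]
  · rw [Psi_apply_of_not_mem hij c H1 hi, mu_eq_self hj, hcv0 hi]
    simp [hi, hj]

-- evaluation lemmas
lemma reps_eval (x : ℕ → A) (i j : ℕ) (w : List ℕ) :
    ((reps i j w).map fun v => (v.map x).prod).sum
      = (w.map (Function.update x i (x i + x j))).prod := by
  induction w with
  | nil => simp [reps]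
  | cons k w ih =>
    by_cases hk : k = i
    · subst hk
      rw [reps, if_pos rfl, List.map_append, List.sum_append,
        List.map_map, List.map_map]
      simp only [Function.comp_def, List.map_cons, List.prod_cons]
      rw [List.sum_map_mul_left, List.sum_map_mul_left, ih,
        Function.update_self, add_mul]
    · rw [reps, if_neg hk, List.map_map]
      simp only [Function.comp_def, List.map_cons, List.prod_cons]
      rw [List.sum_map_mul_left, ih, Function.update_of_ne hk]

lemma ev_Phi (x : ℕ → A) (i j : ℕ) (c : List ℕ →₀ F) :
    ev x (Phi i j c) = ev (Function.update x i (x i + x j)) c := by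
  rw [Phi, map_finsuppSum, ev_apply]
  apply Finsupp.sum_congr
  intro w _
  rw [map_list_sum, List.map_map]
  simp only [Function.comp_def, ev_single]
  rw [← reps_eval x i j w, List.smul_sum, List.map_map]
  rfl

lemma ev_Psi (x : ℕ → A) {i j : ℕ} (c : List ℕ →₀ F) :
    ev x (Psi i j c) = ev (Function.update x i (x j)) c := by
  rw [Psi, ev, Finsupp.linearCombination_mapDomain]
  have hfun : ((fun w : List ℕ => ((w.map x).prod : A)) ∘ nu i j)
      = fun w => (w.map (Function.update x i (x j))).prod := by
    funext w
    simp only [Function.comp_def, nu, List.map_map]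
    congr 1
    apply List.map_congr_left
    intro k _
    by_cases h : k = i <;> simp [Function.update_apply, nuf, h]
  rw [hfun, ev]

lemma ev_Del (x : ℕ → A) (i j : ℕ) (c : List ℕ →₀ F) :
    ev x (Del i j c) = ev (Function.update x i (x i + x j)) c - ev x c
      - ev (Function.update x i (x j)) c := by
  rw [Del, map_sub, map_sub, ev_Phi, ev_Psi]



noncomputable def Tz (i : ℕ) (c : List ℕ →₀ F) : List ℕ →₀ F :=
  Finsupp.filter (fun w => i ∉ w) c

lemma ev_Tz (x : ℕ → A) (i : ℕ) (c : List ℕ →₀ F) :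
    ev x (Tz i c) = ev (Function.update x i 0) c := by
  rw [ev_apply, ev_apply, Finsupp.sum, Finsupp.sum, Tz, Finsupp.support_filter]
  rw [← Finset.sum_filter_of_ne (p := fun w => i ∉ w)
    (f := fun w => c w • (w.map (Function.update x i 0)).prod) ?_]
  · apply Finset.sum_congr rfl
    intro w hw
    rw [Finset.mem_filter] at hw
    rw [Finsupp.filter_apply_pos (p := fun w => i ∉ w) c hw.2]
    congr 2
    apply List.map_congr_left
    intro k hk
    have : k ≠ i := fun e => hw.2 (e ▸ hk)
    rw [Function.update_of_ne this]
  · intro w _ hne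
    by_contra hiw
    apply hne
    have : (0 : A) ∈ w.map (Function.update x i 0) :=
      List.mem_map.2 ⟨i, hiw, Function.update_self _ _ _⟩
    show c w • (w.map (Function.update x i 0)).prod = 0
    rw [List.prod_eq_zero this, smul_zero]

lemma sub_Tz_apply (i : ℕ) (c : List ℕ →₀ F) (v : List ℕ) :
    (c - Tz i c) v = if i ∈ v then c v else 0 := by
  rw [Finsupp.sub_apply, Tz, Finsupp.filter_apply]
  by_cases h : i ∈ v <;> simp [h]

lemma norm (w₀ : List ℕ) (N' : ℕ) (c : List ℕ →₀ F)
    (hid : ∀ x : ℕ → A, ev x c = 0) :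
    ∃ d : List ℕ →₀ F, (∀ x : ℕ → A, ev x d = 0) ∧ d.support ⊆ c.support ∧
      d w₀ = c w₀ ∧ ∀ w ∈ d.support, ∀ k < N', (k ∈ w ↔ k ∈ w₀) := by
  induction N' with
  | zero => exact ⟨c, hid, subset_rfl, rfl, fun w _ k hk => absurd hk (Nat.not_lt_zero k)⟩
  | succ N' ih =>
    obtain ⟨d, hdid, hsub, hw0, hmem⟩ := ih
    by_cases hN : N' ∈ w₀
    · refine ⟨d - Tz N' d, ?_, ?_, ?_, ?_⟩
      · intro x
        rw [map_sub, hdid, ev_Tz, hdid, sub_zero]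
      · intro w hw
        have hv := Finsupp.mem_support_iff.1 hw
        rw [sub_Tz_apply] at hv
        by_cases h : N' ∈ w
        · exact hsub (Finsupp.mem_support_iff.2 (by rwa [if_pos h] at hv))
        · exact absurd rfl (by rwa [if_neg h] at hv)
      · rw [sub_Tz_apply, if_pos hN, hw0]
      · intro w hw k hk
        have hv := Finsupp.mem_support_iff.1 hw
        rw [sub_Tz_apply] at hv
        have hNw : N' ∈ w := by
          by_contra h; exact absurd rfl (by rwa [if_neg h] at hv)
        have hwd : w ∈ d.support := Finsupp.mem_support_iff.2 (by rwa [if_pos hNw] at hv)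
        rcases Nat.lt_succ_iff_lt_or_eq.1 hk with h | rfl
        · exact hmem w hwd k h
        · exact ⟨fun _ => hN, fun _ => hNw⟩
    · refine ⟨Tz N' d, ?_, ?_, ?_, ?_⟩
      · intro x
        rw [ev_Tz, hdid]
      · intro w hw
        rw [Tz, Finsupp.support_filter, Finset.mem_filter] at hw
        exact hsub hw.1
      · rw [Tz, Finsupp.filter_apply_pos (p := fun w => N' ∉ w) d hN, hw0]
      · intro w hw k hk
        have hw' := hw
        rw [Tz, Finsupp.support_filter, Finset.mem_filter] at hw'
        rcases Nat.lt_succ_iff_lt_or_eq.1 hk with h | rfl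
        · exact hmem w hw'.1 k h
        · exact ⟨fun h => absurd h hw'.2, fun h => absurd h hN⟩



lemma exists_mixed {i j : ℕ} (hij : i ≠ j) :
    ∀ {w : List ℕ}, 2 ≤ w.count i → j ∉ w → ∃ v, i ∈ v ∧ j ∈ v ∧ mu i j v = w := by
  intro w
  induction w with
  | nil => intro h2 _; simp at h2
  | cons k w ih =>
    intro h2 hjw
    have hjw' : j ∉ w := fun h => hjw (List.mem_cons_of_mem _ h)
    have hkj : k ≠ j := fun h => hjw (h ▸ List.mem_cons_self)
    by_cases hk : k = i
    · subst hk
      have h1 : 1 ≤ w.count k := by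
        have := List.count_cons_self (a := k) (l := w)
        omega
      have hkw : k ∈ w := List.count_pos_iff.1 h1
      refine ⟨j :: w, List.mem_cons_of_mem _ hkw, List.mem_cons_self, ?_⟩
      rw [mu, List.map_cons]
      rw [show muf k j j = k from by simp [muf]]
      rw [show List.map (muf k j) w = w from mu_eq_self hjw']
    · have h2' : 2 ≤ w.count i := by
        have : (k :: w).count i = w.count i := List.count_cons_of_ne ?_
        · omega
        · exact hk
      obtain ⟨v, hiv, hjv, hmuv⟩ := ih h2' hjw'
      refine ⟨k :: v, List.mem_cons_of_mem _ hiv, List.mem_cons_of_mem _ hjv, ?_⟩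
      rw [mu, List.map_cons, show muf i j k = k from by simp [muf, hkj]]
      rw [show List.map (muf i j) v = mu i j v from rfl, hmuv]

lemma toFinset_mu {i j : ℕ} (hij : i ≠ j) {v : List ℕ} (hiv : i ∈ v) :
    (mu i j v).toFinset = v.toFinset.erase j := by
  ext k
  simp only [List.mem_toFinset, Finset.mem_erase, mu, List.mem_map]
  constructor
  · rintro ⟨k', hk', rfl⟩
    by_cases h : k' = j
    · subst h
      exact ⟨by simp [muf, hij], by simpa [muf] using hiv⟩
    · refine ⟨by simp [muf, h], by simpa [muf, h] using hk'⟩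
  · rintro ⟨hkj, hkv⟩
    exact ⟨k, hkv, by simp [muf, hkj]⟩



def Goal (F : Type*) [Field F] (A : Type*) [Ring A] [Algebra F A] (n : ℕ) : Prop :=
  ∃ m, m ≤ n ∧ 0 < m ∧ ∃ β : Equiv.Perm (Fin m) → F,
    ∀ x : Fin m → A, (List.ofFn x).prod =
      ∑ σ ∈ Finset.univ.filter (fun σ : Equiv.Perm (Fin m) => σ ≠ 1),
        β σ • (List.ofFn fun i => x (σ i)).prod

lemma ofFn_get_cast {α : Type*} (w : List α) {m : ℕ} (hl : w.length = m) :
    (List.ofFn fun t : Fin m => w.get (Fin.cast hl.symm t)) = w := by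
  subst hl
  exact List.ofFn_get w

lemma endgame [Nontrivial A] {n N : ℕ} (c : List ℕ →₀ F) (hc : c ≠ 0)
    (hid : ∀ x : ℕ → A, ev x c = 0)
    (hlen : ∀ w ∈ c.support, w.length ≤ n)
    (hvar : ∀ w ∈ c.support, ∀ k ∈ w, k < N)
    (hnd : ∀ w ∈ c.support, w.Nodup) :
    Goal F A n := by
  obtain ⟨w₀, hw₀⟩ := Finsupp.support_nonempty_iff.2 hc
  obtain ⟨d, hdid, hsub, hw0, hmem⟩ := norm (A := A) w₀ N c hid
  have hd0 : d w₀ ≠ 0 := by rw [hw0]; exact Finsupp.mem_support_iff.1 hw₀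
  have hperm : ∀ w ∈ d.support, ∀ k : ℕ, k ∈ w ↔ k ∈ w₀ := by
    intro w hw k
    by_cases hk : k < N
    · exact hmem w hw k hk
    · constructor
      · intro h; exact absurd (hvar w (hsub hw) k h) hk
      · intro h; exact absurd (hvar w₀ hw₀ k h) hk
  have hndw₀ : w₀.Nodup := hnd w₀ hw₀
  -- the case w₀ = [] is contradictory
  rcases List.eq_nil_or_concat w₀ with rfl | hne
  · exfalso
    have hdsingle : d = Finsupp.single [] (d []) := by
      ext w
      rcases w with - | ⟨k, w⟩
      · simp
      · rw [Finsupp.single_apply, if_neg (by simp)]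
        by_contra h
        have hk := (hperm _ (Finsupp.mem_support_iff.2 h) k).1 (List.mem_cons_self (a := k) (l := w))
        simp at hk
    have hzero := hdid (fun _ => (0 : A))
    rw [hdsingle, ev_single] at hzero
    simp only [List.map_nil, List.prod_nil] at hzero
    have : d [] = 0 := by
      have h1 : algebraMap F A (d []) = 0 := by
        rw [Algebra.algebraMap_eq_smul_one, hzero]
      exact (algebraMap F A).injective (by rw [h1, map_zero])
    exact hd0 this
  have hm : 0 < w₀.length := by
    obtain ⟨l, a, rfl⟩ := hne
    simp
  refine ⟨w₀.length, hlen w₀ hw₀, hm, ?_⟩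
  -- words associated to permutations
  set m := w₀.length with hmdef
  have hgetinj : Function.Injective w₀.get := List.nodup_iff_injective_get.1 hndw₀
  set word : Equiv.Perm (Fin m) → List ℕ := fun σ => List.ofFn fun t => w₀.get (σ t) with hword
  have hword_inj : Function.Injective word := by
    intro σ τ h
    have := List.ofFn_injective h
    ext t
    exact Fin.val_eq_of_eq (hgetinj (congrFun this t))
  have hword_one : word 1 = w₀ := by
    rw [hword]; exact List.ofFn_get w₀
  have hword_mem : ∀ σ, ∀ k, k ∈ word σ ↔ k ∈ w₀ := by
    intro σ k
    simp only [hword, List.mem_ofFn]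
    constructor
    · rintro ⟨t, rfl⟩; exact List.mem_iff_get.2 ⟨_, rfl⟩
    · intro hk
      obtain ⟨t, ht⟩ := List.mem_iff_get.1 hk
      refine ⟨σ.symm t, ?_⟩
      simp only [Equiv.apply_symm_apply]
      exact ht
  have hsupp_word : ∀ w ∈ d.support, ∃ σ, word σ = w := by
    intro w hw
    have hwnd : w.Nodup := hnd w (hsub hw)
    have hwperm : w.Perm w₀ := (List.perm_ext_iff_of_nodup hwnd hndw₀).2 (hperm w hw)
    have hl : w.length = m := hwperm.length_eq
    have hg : ∀ t : Fin m, w.get (Fin.cast hl.symm t) ∈ w₀ := fun t =>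
      (hperm w hw _).1 (List.mem_iff_get.2 ⟨_, rfl⟩)
    set g : Fin m → Fin m := fun t =>
      ⟨w₀.idxOf (w.get (Fin.cast hl.symm t)), List.idxOf_lt_length_iff.2 (hg t)⟩ with hgdef
    have hw₀g : ∀ t, w₀.get (g t) = w.get (Fin.cast hl.symm t) := by
      intro t
      exact List.idxOf_get _
    have hginj : Function.Injective g := by
      intro t t' h
      have h2 : w.get (Fin.cast hl.symm t) = w.get (Fin.cast hl.symm t') := by
        rw [← hw₀g, ← hw₀g, h]
      have := List.nodup_iff_injective_get.1 hwnd h2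
      simpa [Fin.ext_iff] using this
    refine ⟨Equiv.ofBijective g (Finite.injective_iff_bijective.1 hginj), ?_⟩
    rw [hword]
    simp only [Equiv.ofBijective_apply]
    have hfun : (fun t : Fin m => w₀.get (g t)) = fun t => w.get (Fin.cast hl.symm t) :=
      funext hw₀g
    rw [hfun]
    exact ofFn_get_cast w hl
  -- the coefficients
  refine ⟨fun σ => -(d w₀)⁻¹ * d (word σ), ?_⟩
  intro x
  set xh : ℕ → A := fun k =>
    if hk : k ∈ w₀ then x ⟨w₀.idxOf k, List.idxOf_lt_length_iff.2 hk⟩ else 0 with hxh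
  have hxhget : ∀ s : Fin m, xh (w₀.get s) = x s := by
    intro s
    have hmem' : w₀.get s ∈ w₀ := List.mem_iff_get.2 ⟨s, rfl⟩
    rw [hxh]
    simp only [dif_pos hmem']
    congr 1
    ext
    simp [List.Nodup.idxOf_getElem hndw₀]
  have hmap : ∀ σ, (word σ).map xh = List.ofFn fun t => x (σ t) := by
    intro σ
    rw [hword]
    rw [List.map_ofFn]
    congr 1
    funext t
    exact hxhget (σ t)
  have hkey : ∑ σ : Equiv.Perm (Fin m), d (word σ) • (List.ofFn fun t => x (σ t)).prod = 0 := by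
    have h1 : ∑ σ : Equiv.Perm (Fin m), d (word σ) • (List.ofFn fun t => x (σ t)).prod
        = ∑ w ∈ Finset.univ.image word, d w • (w.map xh).prod := by
      rw [Finset.sum_image (fun a _ b _ h => hword_inj h)]
      apply Finset.sum_congr rfl
      intro σ _
      rw [hmap]
    rw [h1]
    have h2 : ∑ w ∈ Finset.univ.image word, d w • ((w.map xh).prod)
        = ∑ w ∈ d.support, d w • ((w.map xh).prod) := by
      apply (Finset.sum_subset ?_ ?_).symm
      · intro w hw
        obtain ⟨σ, hσ⟩ := hsupp_word w hw
        exact Finset.mem_image.2 ⟨σ, Finset.mem_univ σ, hσ⟩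
      · intro w _ hw
        rw [Finsupp.notMem_support_iff.1 hw, zero_smul]
    have h3 : ev xh d = ∑ w ∈ d.support, d w • ((w.map xh).prod) := ev_apply xh d
    rw [h2, ← h3, hdid]
  rw [← Finset.add_sum_erase _ _ (Finset.mem_univ (1 : Equiv.Perm (Fin m)))] at hkey
  rw [hword_one] at hkey
  have hsplit : d w₀ • (List.ofFn fun t => x ((1 : Equiv.Perm (Fin m)) t)).prod
      = - ∑ σ ∈ Finset.univ.erase 1, d (word σ) • (List.ofFn fun t => x (σ t)).prod :=
    eq_neg_of_add_eq_zero_left hkey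
  have hone : (List.ofFn fun t => x ((1 : Equiv.Perm (Fin m)) t)) = List.ofFn x := by
    congr 1
  rw [hone] at hsplit
  have hstart : (List.ofFn x).prod = (d w₀)⁻¹ • (d w₀ • (List.ofFn x).prod) := by
    rw [smul_smul, inv_mul_cancel₀ hd0, one_smul]
  rw [hstart, hsplit, smul_neg, Finset.smul_sum, Finset.filter_ne']
  rw [← Finset.sum_neg_distrib]
  apply Finset.sum_congr rfl
  intro σ _
  rw [smul_smul]
  show -(((d w₀)⁻¹ * d (word σ)) • (List.ofFn fun t => x (σ t)).prod)
      = (-(d w₀)⁻¹ * d (word σ)) • (List.ofFn fun i => x (σ i)).prod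
  rw [neg_mul, neg_smul]



lemma main [Nontrivial A] (n : ℕ) : ∀ (E N : ℕ) (c : List ℕ →₀ F), c ≠ 0 →
    (∀ x : ℕ → A, ev x c = 0) →
    (∀ w ∈ c.support, w.length ≤ n) →
    (∀ w ∈ c.support, ∀ k ∈ w, k < N) →
    (∀ w ∈ c.support, w.length - w.dedup.length ≤ E) →
    Goal F A n := by
  intro E
  induction E with
  | zero =>
    intro N c hc hid hlen hvar hE
    apply endgame (N := N) c hc hid hlen hvar
    intro w hw
    have h1 := hE w hw
    have h2 : w.dedup.length ≤ w.length := w.dedup_sublist.length_le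
    have h3 : w.dedup.length = w.length := by omega
    exact List.dedup_eq_self.1 (w.dedup_sublist.eq_of_length h3)
  | succ E ih =>
    intro N c hc hid hlen hvar hE
    by_cases hnd : ∀ w ∈ c.support, w.Nodup
    · exact endgame (N := N) c hc hid hlen hvar hnd
    push_neg at hnd
    obtain ⟨w₁, hw₁, hw₁nd⟩ := hnd
    obtain ⟨i, hdup⟩ := List.exists_duplicate_iff_not_nodup.2 hw₁nd
    have hcount : 2 ≤ w₁.count i := List.duplicate_iff_two_le_count.1 hdup
    have hiw₁ : i ∈ w₁ := hdup.mem
    have hiN : i < N := hvar w₁ hw₁ i hiw₁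
    have hij : i ≠ N := Nat.ne_of_lt hiN
    set c' := c - Tz i c with hc'
    have hc'app : ∀ v, c' v = if i ∈ v then c v else 0 := fun v => sub_Tz_apply i c v
    have hsub' : c'.support ⊆ c.support := by
      intro w hw
      have hv := Finsupp.mem_support_iff.1 hw
      rw [hc'app] at hv
      by_cases h : i ∈ w
      · exact Finsupp.mem_support_iff.2 (by rwa [if_pos h] at hv)
      · exact absurd rfl (by rwa [if_neg h] at hv)
    have H2 : ∀ w ∈ c'.support, i ∈ w := fun w hw => by
      by_contra h
      exact Finsupp.mem_support_iff.1 hw (by rw [hc'app, if_neg h])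
    have H1 : ∀ w ∈ c'.support, N ∉ w := fun w hw h =>
      Nat.lt_irrefl N (hvar w (hsub' hw) N h)
    have hc'id : ∀ x : ℕ → A, ev x c' = 0 := fun x => by
      rw [hc', map_sub, hid, ev_Tz, hid, sub_zero]
    have hc'w₁ : c' w₁ = c w₁ := by rw [hc'app, if_pos hiw₁]
    have hNw₁ : N ∉ w₁ := fun h => Nat.lt_irrefl N (hvar w₁ hw₁ N h)
    set D := Del i N c' with hD
    have hDapp : ∀ v, D v = if i ∈ v ∧ N ∈ v then c' (mu i N v) else 0 :=
      fun v => Del_apply hij c' H1 H2 v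
    obtain ⟨v₀, hiv₀, hNv₀, hmuv₀⟩ := exists_mixed hij hcount hNw₁
    have hD0 : D ≠ 0 := by
      intro h
      have hv := hDapp v₀
      rw [h, Finsupp.coe_zero, Pi.zero_apply, if_pos ⟨hiv₀, hNv₀⟩, hmuv₀, hc'w₁] at hv
      exact Finsupp.mem_support_iff.1 hw₁ hv.symm
    have hDsupp : ∀ v ∈ D.support, i ∈ v ∧ N ∈ v ∧ mu i N v ∈ c'.support := by
      intro v hv
      have h := Finsupp.mem_support_iff.1 hv
      rw [hDapp] at h
      by_cases hc : i ∈ v ∧ N ∈ v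
      · rw [if_pos hc] at h
        exact ⟨hc.1, hc.2, Finsupp.mem_support_iff.2 h⟩
      · exact absurd rfl (by rwa [if_neg hc] at h)
    have hDid : ∀ x : ℕ → A, ev x D = 0 := fun x => by
      rw [hD, ev_Del, hc'id, hc'id, hc'id, sub_zero, sub_zero]
    have hmulen : ∀ v : List ℕ, (mu i N v).length = v.length := fun v => by simp [mu]
    apply ih (N + 1) D hD0 hDid
    · intro v hv
      obtain ⟨-, -, hmem⟩ := hDsupp v hv
      have := hlen _ (hsub' hmem)
      rw [hmulen v] at this
      exact this
    · intro v hv k hk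
      obtain ⟨-, -, hmem⟩ := hDsupp v hv
      by_cases h : k = N
      · omega
      · have hkmu : k ∈ mu i N v := List.mem_map.2 ⟨k, hk, by simp [muf, h]⟩
        have := hvar _ (hsub' hmem) k hkmu
        omega
    · intro v hv
      obtain ⟨hiv, hNv, hmem⟩ := hDsupp v hv
      have hEu := hE _ (hsub' hmem)
      have hlenu := hmulen v
      have hcard : (mu i N v).toFinset.card = v.toFinset.card - 1 := by
        rw [toFinset_mu hij hiv, Finset.card_erase_of_mem (List.mem_toFinset.2 hNv)]
      have hc1 : (mu i N v).toFinset.card = (mu i N v).dedup.length :=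
        List.card_toFinset _
      have hc2 : v.toFinset.card = v.dedup.length := List.card_toFinset _
      have hpos : 0 < v.toFinset.card := Finset.card_pos.2 ⟨N, List.mem_toFinset.2 hNv⟩
      have hdlen : v.dedup.length ≤ v.length := v.dedup_sublist.length_le
      omega



end Stmt15


open Stmt15 in
theorem stmt_15 {F A : Type*} [Field F] [Ring A] [Algebra F A] [Nontrivial A]
    (n : ℕ) (c : (List (Fin n)) →₀ F) (hc : c ≠ 0)
    (hdeg : ∀ w ∈ c.support, w.length ≤ n)
    (htop : ∃ w ∈ c.support, w.length = n)
    (hid : ∀ x : Fin n → A, (c.sum fun w a => a • (w.map x).prod) = 0) :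
    ∃ m, m ≤ n ∧ 0 < m ∧ ∃ β : Equiv.Perm (Fin m) → F,
      ∀ x : Fin m → A, (List.ofFn x).prod =
        ∑ σ ∈ Finset.univ.filter (fun σ : Equiv.Perm (Fin m) => σ ≠ 1),
          β σ • (List.ofFn fun i => x (σ i)).prod := by
  classical
  set f : List (Fin n) → List ℕ := List.map (Fin.val) with hf
  have hfinj : Function.Injective f := List.map_injective_iff.2 Fin.val_injective
  set ch : List ℕ →₀ F := Finsupp.mapDomain f c with hch
  have hch0 : ch ≠ 0 := by
    intro h
    apply hc
    apply Finsupp.mapDomain_injective hfinj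
    rw [← hch, h, Finsupp.mapDomain_zero]
  have hchid : ∀ x : ℕ → A, ev x ch = 0 := by
    intro x
    rw [hch, ev, Finsupp.linearCombination_mapDomain]
    have hfun : ((fun w : List ℕ => ((w.map x).prod : A)) ∘ f)
        = fun w : List (Fin n) => (w.map (x ∘ Fin.val)).prod := by
      funext w
      simp [hf, Function.comp_def, List.map_map]
    rw [hfun, Finsupp.linearCombination_apply]
    exact hid (x ∘ Fin.val)
  have hchsupp : ∀ w ∈ ch.support, ∃ w' ∈ c.support, w = f w' := by
    intro w hw
    have := Finsupp.mapDomain_support (f := f) (s := c) hw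
    obtain ⟨w', hw', rfl⟩ := Finset.mem_image.1 this
    exact ⟨w', hw', rfl⟩
  have hres := main (F := F) (A := A) n n n ch hch0 hchid ?_ ?_ ?_
  · exact hres
  · intro w hw
    obtain ⟨w', hw', rfl⟩ := hchsupp w hw
    rw [hf]
    simpa using hdeg w' hw'
  · intro w hw k hk
    obtain ⟨w', hw', rfl⟩ := hchsupp w hw
    rw [hf] at hk
    obtain ⟨t, -, rfl⟩ := List.mem_map.1 hk
    exact t.isLt
  · intro w hw
    obtain ⟨w', hw', rfl⟩ := hchsupp w hw
    have h1 : (f w').length ≤ n := by rw [hf]; simpa using hdeg w' hw'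
    omega
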